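/- Let F be analytic on the unit disk with F(0) = 0, F'(0) = 1, and Re(z F''(z) + F'(z)) > 1/2 for all z in the unit disk. Then Re F'(z) ≥ log 2 > 1/2 for all z in the unit disk. -/

import Mathlib

open Metric Set Complex

/-- Harnack-type bound via Schwarz lemma. -/
lemma harnack (h : ℂ → ℂ) (hd : DifferentiableOn ℂ h (ball 0 1)) (h0 : h 0 = 1)
    (hre : ∀ z ∈ ball (0 : ℂ) 1, 0 < (h z).re) :
    ∀ z ∈ ball (0 : ℂ) 1, (1 - ‖z‖) / (1 + ‖z‖) ≤ (h z).re := by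
  intro z hz
  set φ : ℂ → ℂ := fun w => (h w - 1) / (h w + 1) with hφdef
  have hne : ∀ w ∈ ball (0 : ℂ) 1, h w + 1 ≠ 0 := by
    intro w hw
    have := hre w hw
    intro hc
    have : (h w + 1).re = 0 := by rw [hc]; simp
    simp only [Complex.add_re, Complex.one_re] at this
    linarith
  have hφd : DifferentiableOn ℂ φ (ball 0 1) :=
    ((hd.sub (differentiableOn_const 1)).div (hd.add (differentiableOn_const 1)) hne)
  have hφmaps : MapsTo φ (ball (0:ℂ) 1) (ball (0:ℂ) 1) := by
    intro w hw
    have hp := hre w hw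
    rw [mem_ball_zero_iff]
    have hlt : ‖h w - 1‖ < ‖h w + 1‖ := by
      rw [Complex.norm_def, Complex.norm_def]
      apply Real.sqrt_lt_sqrt (Complex.normSq_nonneg _)
      rw [Complex.normSq_apply, Complex.normSq_apply]
      simp only [Complex.sub_re, Complex.sub_im, Complex.add_re, Complex.add_im,
        Complex.one_re, Complex.one_im]
      nlinarith
    calc ‖(h w - 1) / (h w + 1)‖
        = ‖h w - 1‖ / ‖h w + 1‖ := norm_div _ _
      _ < 1 := by
          rw [div_lt_one (lt_of_le_of_lt (norm_nonneg _) hlt)]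
          exact hlt
  have hφ0 : φ 0 = 0 := by simp [hφdef, h0]
  have hzb : ‖z‖ < 1 := mem_ball_zero_iff.mp hz
  have hschwarz : ‖φ z‖ ≤ ‖z‖ :=
    Complex.norm_le_norm_of_mapsTo_ball_self hφd (hφmaps.mono_right ball_subset_closedBall) hφ0 hzb
  -- recover h z = (1 + φ z)/(1 - φ z)
  set u := φ z with hu
  have huabs : ‖u‖ < 1 := lt_of_le_of_lt hschwarz hzb
  have hune : (1 : ℂ) - u ≠ 0 := by
    intro hc
    have : u = 1 := by linear_combination -hc
    rw [this] at huabs; simp at huabs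
  have hhz : h z = (1 + u) / (1 - u) := by
    have hne' := hne z hz
    have hk : u * (h z + 1) = h z - 1 := by rw [hu, hφdef]; exact div_mul_cancel₀ _ hne'
    field_simp [hu, hφdef]
    linear_combination -hk
  have hrecalc : (h z).re = (1 - (u.re ^ 2 + u.im ^ 2)) / ((1 - u.re) ^ 2 + u.im ^ 2) := by
    rw [hhz, Complex.div_re]
    have : Complex.normSq (1 - u) = (1 - u.re) ^ 2 + u.im ^ 2 := by
      simp [Complex.normSq_apply]; ring
    rw [this]
    simp only [Complex.add_re, Complex.add_im, Complex.sub_re, Complex.sub_im,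
      Complex.one_re, Complex.one_im]
    ring
  rw [hrecalc]
  set a := u.re
  set b := u.im
  set r := ‖z‖ with hr
  have hr0 : 0 ≤ r := norm_nonneg z
  have hs : a ^ 2 + b ^ 2 ≤ r ^ 2 := by
    have : ‖u‖ ^ 2 ≤ r ^ 2 := by
      apply sq_le_sq' _ hschwarz
      linarith [norm_nonneg u]
    rwa [Complex.sq_norm, Complex.normSq_apply, ← sq, ← sq] at this
  have hden : 0 < (1 - a) ^ 2 + b ^ 2 := by
    rcases eq_or_ne ((1 - a) ^ 2 + b ^ 2) 0 with hc | hc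
    · exfalso
      have ha1 : a = 1 := by nlinarith [sq_nonneg (1-a), sq_nonneg b]
      have hb0 : b = 0 := by nlinarith [sq_nonneg (1-a), sq_nonneg b]
      nlinarith
    · positivity
  rw [div_le_div_iff₀ (by positivity) hden]
  have habs : a ^ 2 ≤ r ^ 2 := by nlinarith [sq_nonneg b]
  have har : -r ≤ a := by nlinarith [sq_nonneg (a + r)]
  nlinarith [mul_nonneg (sub_nonneg.mpr hzb.le) (by linarith : (0:ℝ) ≤ a + r), sq_nonneg b]

theorem stmt6 (F : ℂ → ℂ) (hF : DifferentiableOn ℂ F (Metric.ball 0 1))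
    (hF0 : F 0 = 0) (hF'0 : deriv F 0 = 1)
    (hre : ∀ z ∈ Metric.ball (0 : ℂ) 1,
      (1 : ℝ) / 2 < (z * deriv (deriv F) z + deriv F z).re) :
    (1 : ℝ) / 2 < Real.log 2 ∧
      ∀ z ∈ Metric.ball (0 : ℂ) 1, Real.log 2 ≤ (deriv F z).re := by
  have hlog2 : (1:ℝ)/2 < Real.log 2 := by
    have := Real.log_two_gt_d9; linarith
  have hlog2' : Real.log 2 < 1 := by
    have := Real.log_two_lt_d9; linarith
  refine ⟨hlog2, ?_⟩
  set g : ℂ → ℂ := fun w => w * deriv (deriv F) w + deriv F w with hgdef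
  have hA : AnalyticOnNhd ℂ F (Metric.ball 0 1) := hF.analyticOnNhd Metric.isOpen_ball
  have hA1 : AnalyticOnNhd ℂ (deriv F) (Metric.ball 0 1) := hA.deriv
  have hA2 : AnalyticOnNhd ℂ (deriv (deriv F)) (Metric.ball 0 1) := hA1.deriv
  have hgd : DifferentiableOn ℂ g (Metric.ball 0 1) :=
    (differentiableOn_id.mul hA2.differentiableOn).add hA1.differentiableOn
  have hg0 : g 0 = 1 := by simp [hgdef, hF'0]
  -- lower bound on Re g via Harnack-type estimate
  have hglb : ∀ w ∈ Metric.ball (0:ℂ) 1, 1 / (1 + ‖w‖) ≤ (g w).re := by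
    have hh := harnack (fun w => 2 * g w - 1)
      (((differentiableOn_const 2).mul hgd).sub (differentiableOn_const 1))
      (by simp [hg0]; norm_num)
      (by intro w hw
          have h1 := hre w hw
          have : ((2:ℂ) * g w - 1).re = 2 * (g w).re - 1 := by
            simp [Complex.sub_re, Complex.mul_re]
          rw [this]
          simp only [hgdef] at *
          linarith)
    intro w hw
    have h1 := hh w hw
    have hr0 : (0:ℝ) ≤ ‖w‖ := norm_nonneg w
    have heq : ((2:ℂ) * g w - 1).re = 2 * (g w).re - 1 := by
      simp [Complex.sub_re, Complex.mul_re]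
    rw [heq] at h1
    rw [div_le_iff₀ (by linarith)] at h1 ⊢
    nlinarith
  intro z hz
  rcases eq_or_ne z 0 with rfl | hz0
  · rw [hF'0]; simp; linarith
  · set r : ℝ := ‖z‖ with hrdef
    have hr1 : r < 1 := mem_ball_zero_iff.mp hz
    have hr0 : 0 < r := norm_pos_iff.mpr hz0
    -- members of the ball along the segment
    have hmem : ∀ t : ℝ, t ∈ Set.uIcc (0:ℝ) 1 → (t:ℂ) * z ∈ Metric.ball (0:ℂ) 1 := by
      intro t ht
      rw [Set.uIcc_of_le (by norm_num)] at ht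
      rw [mem_ball_zero_iff, norm_mul, Complex.norm_real, Real.norm_eq_abs,
        _root_.abs_of_nonneg ht.1]
      nlinarith [ht.2]
    -- derivative of t ↦ (t z) F'(t z)
    have hHd : ∀ w ∈ Metric.ball (0:ℂ) 1,
        HasDerivAt (fun w => w * deriv F w) (g w) w := by
      intro w hw
      have h2 : HasDerivAt (deriv F) (deriv (deriv F) w) w :=
        ((hA1 w hw).differentiableAt).hasDerivAt
      have := (hasDerivAt_id w).mul h2
      exact this.congr_deriv (by simp only [hgdef, id, one_mul]; ring)
    have hc : ∀ t : ℝ, HasDerivAt (fun t : ℝ => (t:ℂ) * z) z t := by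
      intro t
      simpa using (Complex.ofRealCLM.hasDerivAt (x := t)).mul_const z
    have hψ : ∀ t ∈ Set.uIcc (0:ℝ) 1,
        HasDerivAt ((fun w => w * deriv F w) ∘ (fun t : ℝ => (t:ℂ) * z))
          (z • g ((t:ℂ)*z)) t := by
      intro t ht
      exact HasDerivAt.scomp t (hHd _ (hmem t ht)) (hc t)
    have hcont : ContinuousOn (fun t : ℝ => g ((t:ℂ)*z)) (Set.uIcc (0:ℝ) 1) := by
      apply hgd.continuousOn.comp
      · exact (Complex.continuous_ofReal.mul continuous_const).continuousOn
      · exact hmem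
    have hint : IntervalIntegrable (fun t : ℝ => g ((t:ℂ)*z)) MeasureTheory.volume 0 1 :=
      hcont.intervalIntegrable
    have hint' : IntervalIntegrable (fun t : ℝ => z • g ((t:ℂ)*z)) MeasureTheory.volume 0 1 :=
      ContinuousOn.intervalIntegrable (u := fun t : ℝ => z • g ((t:ℂ)*z)) (continuousOn_const.mul hcont)
    have hFTC : ∫ t in (0:ℝ)..1, z • g ((t:ℂ)*z) = z * deriv F z := by
      rw [intervalIntegral.integral_eq_sub_of_hasDerivAt hψ hint']
      simp [Function.comp]
    have hinteq : deriv F z = ∫ t in (0:ℝ)..1, g ((t:ℂ)*z) := by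
      apply mul_left_cancel₀ hz0
      rw [← hFTC, intervalIntegral.integral_smul, smul_eq_mul]
    -- take real parts
    have hre_eq : (deriv F z).re = ∫ t in (0:ℝ)..1, (g ((t:ℂ)*z)).re := by
      rw [hinteq]
      exact (Complex.reCLM.intervalIntegral_comp_comm hint).symm
    -- lower bound integrand
    have hintlb : IntervalIntegrable (fun t : ℝ => 1 / (1 + t * r)) MeasureTheory.volume 0 1 := by
      apply ContinuousOn.intervalIntegrable
      apply ContinuousOn.div continuousOn_const
      · exact (continuousOn_const.add ((continuousOn_id).mul continuousOn_const))
      · intro t ht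
        rw [Set.uIcc_of_le (by norm_num)] at ht
        intro hc
        nlinarith [mul_nonneg ht.1 hr0.le]
    have hmono : ∫ t in (0:ℝ)..1, 1 / (1 + t * r) ≤ ∫ t in (0:ℝ)..1, (g ((t:ℂ)*z)).re := by
      apply intervalIntegral.integral_mono_on (by norm_num) hintlb
        (Complex.reCLM.continuous.comp_continuousOn hcont).intervalIntegrable
      intro t ht
      have ht' : t ∈ Set.uIcc (0:ℝ) 1 := by
        rw [Set.uIcc_of_le (by norm_num)]; exact ht
      have := hglb _ (hmem t ht')
      rw [norm_mul, Complex.norm_real, Real.norm_eq_abs, _root_.abs_of_nonneg ht.1] at this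
      simpa using this
    -- compute the lower integral
    have hlogint : ∫ t in (0:ℝ)..1, 1 / (1 + t * r) = Real.log (1 + r) / r := by
      have hd : ∀ t ∈ Set.uIcc (0:ℝ) 1,
          HasDerivAt (fun t : ℝ => Real.log (1 + t * r) / r) (1 / (1 + t * r)) t := by
        intro t ht
        rw [Set.uIcc_of_le (by norm_num)] at ht
        have hpos : 0 < 1 + t * r := by nlinarith [ht.1]
        have hin : HasDerivAt (fun t : ℝ => 1 + t * r) r t := by
          simpa using ((hasDerivAt_id t).mul_const r).const_add 1
        have := ((Real.hasDerivAt_log hpos.ne').comp t hin).div_const r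
        exact this.congr_deriv (by rw [mul_div_assoc, div_self hr0.ne', mul_one, one_div])
      rw [intervalIntegral.integral_eq_sub_of_hasDerivAt hd hintlb]
      simp
    -- final inequality: log 2 ≤ log(1+r)/r
    have hfin : Real.log 2 ≤ Real.log (1 + r) / r := by
      rw [le_div_iff₀ hr0]
      have hconv := convexOn_exp.2 (Set.mem_univ (0:ℝ)) (Set.mem_univ (Real.log 2))
        (by linarith : (0:ℝ) ≤ 1 - r) hr0.le (by ring)
      simp only [smul_eq_mul, mul_zero, zero_add, Real.exp_zero, mul_one,
        Real.exp_log two_pos] at hconv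
      have h2r : Real.exp (r * Real.log 2) ≤ 1 + r := by linarith
      calc Real.log 2 * r = r * Real.log 2 := by ring
        _ = Real.log (Real.exp (r * Real.log 2)) := (Real.log_exp _).symm
        _ ≤ Real.log (1 + r) := Real.log_le_log (Real.exp_pos _) h2r
    rw [hre_eq]
    calc Real.log 2 ≤ Real.log (1 + r) / r := hfin
      _ = ∫ t in (0:ℝ)..1, 1 / (1 + t * r) := hlogint.symm
      _ ≤ _ := hmono
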